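/- Let h: ℝⁿ → ℝ be strictly convex and absolutely symmetric (invariant under permutations and sign changes of coordinates). Then the function X ↦ h(σ(X)) on n×n real matrices, where σ(X) is the vector of singular values, is strictly convex. -/

import Mathlib

open Matrix

/-- Singular values of a real square matrix, in nonincreasing order. -/
noncomputable def svals {n : ℕ} (A : Matrix (Fin n) (Fin n) ℝ) : Fin n → ℝ :=
  fun i =>
    let e : Fin n → ℝ := fun j => Real.sqrt (((by simpa only [Matrix.conjTranspose_eq_transpose_of_trivial] using Matrix.isHermitian_conjTranspose_mul_self A : (Aᵀ * A).IsHermitian)).eigenvalues j)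
    (e ∘ Tuple.sort e) i.rev

open Finset

section basic
variable {n : ℕ} (X : Matrix (Fin n) (Fin n) ℝ)

lemma svals_nonneg (i : Fin n) : 0 ≤ svals X i := Real.sqrt_nonneg _

lemma svals_antitone : Antitone (svals X) := by
  intro i j hij
  have hm := Tuple.monotone_sort
    (fun j => Real.sqrt (((by simpa only [Matrix.conjTranspose_eq_transpose_of_trivial] using Matrix.isHermitian_conjTranspose_mul_self X : (Xᵀ * X).IsHermitian)).eigenvalues j))
  exact hm (Fin.rev_le_rev.mpr hij)

lemma svals_exists_perm : ∃ ρ : Equiv.Perm (Fin n), ∀ j,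
    Real.sqrt (((by simpa only [Matrix.conjTranspose_eq_transpose_of_trivial] using Matrix.isHermitian_conjTranspose_mul_self X : (Xᵀ * X).IsHermitian)).eigenvalues j) = svals X (ρ j) := by
  set e : Fin n → ℝ := fun j => Real.sqrt (((by simpa only [Matrix.conjTranspose_eq_transpose_of_trivial] using Matrix.isHermitian_conjTranspose_mul_self X : (Xᵀ * X).IsHermitian)).eigenvalues j)
  refine ⟨(Fin.revPerm.trans (Tuple.sort e)).symm, fun j => ?_⟩
  show e j = e (Tuple.sort e (Fin.rev _))
  congr 1
  have : (Fin.revPerm.trans (Tuple.sort e)) ((Fin.revPerm.trans (Tuple.sort e)).symm j) = j :=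
    Equiv.apply_symm_apply _ _
  simpa using this.symm

end basic

section svd
variable {n : ℕ}

open RealInnerProductSpace

lemma exists_svd (X : Matrix (Fin n) (Fin n) ℝ) :
    ∃ (U V : OrthonormalBasis (Fin n) ℝ (EuclideanSpace ℝ (Fin n))),
      ∀ j, Matrix.toEuclideanLin X (V j) = svals X j • U j := by
  classical
  obtain ⟨ρ, hρ⟩ := svals_exists_perm X
  set hH := (by simpa only [Matrix.conjTranspose_eq_transpose_of_trivial] using Matrix.isHermitian_conjTranspose_mul_self X : (Xᵀ * X).IsHermitian) with hHdef
  set V₀ := hH.eigenvectorBasis with hV₀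
  set s : Fin n → ℝ := fun j => Real.sqrt (hH.eigenvalues j) with hs
  have hev0 : ∀ j, 0 ≤ hH.eigenvalues j := by
    intro j
    have := (Matrix.posSemidef_conjTranspose_mul_self X).eigenvalues_nonneg j
    simpa using this
  have hsq : ∀ j, s j ^ 2 = hH.eigenvalues j := fun j => Real.sq_sqrt (hev0 j)
  set T : EuclideanSpace ℝ (Fin n) →ₗ[ℝ] EuclideanSpace ℝ (Fin n) := Matrix.toEuclideanLin X with hT
  have hmul : ∀ v : EuclideanSpace ℝ (Fin n),
      Matrix.toEuclideanLin Xᵀ (T v) = Matrix.toEuclideanLin (Xᵀ * X) v := by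
    intro v
    simp [hT, Matrix.toEuclideanLin_apply, Matrix.mulVec_mulVec]
  have h2 : ∀ j, Matrix.toEuclideanLin (Xᵀ * X) (V₀ j) = hH.eigenvalues j • V₀ j := by
    intro j
    have := hH.mulVec_eigenvectorBasis j
    apply (WithLp.equiv 2 _).injective
    simpa [Matrix.toEuclideanLin_apply] using this
  have key : ∀ i j, ⟪T (V₀ i), T (V₀ j)⟫ = hH.eigenvalues j * ⟪V₀ i, V₀ j⟫ := by
    intro i j
    have hXT : Xᵀ = Xᴴ := by
      ext a b
      simp [Matrix.conjTranspose_apply]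
    calc ⟪T (V₀ i), T (V₀ j)⟫ = ⟪V₀ i, LinearMap.adjoint T (T (V₀ j))⟫ :=
          (LinearMap.adjoint_inner_right T _ _).symm
      _ = ⟪V₀ i, Matrix.toEuclideanLin Xᵀ (T (V₀ j))⟫ := by
          rw [hT, hXT, Matrix.toEuclideanLin_conjTranspose_eq_adjoint]
      _ = ⟪V₀ i, Matrix.toEuclideanLin (Xᵀ * X) (V₀ j)⟫ := by rw [hmul]
      _ = hH.eigenvalues j * ⟪V₀ i, V₀ j⟫ := by rw [h2, real_inner_smul_right]
  set S : Set (Fin n) := {j | s j ≠ 0} with hS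
  set w : Fin n → EuclideanSpace ℝ (Fin n) := fun j => (s j)⁻¹ • T (V₀ j) with hw
  have horm : Orthonormal ℝ (S.restrict w) := by
    rw [orthonormal_iff_ite]
    rintro ⟨i, hi⟩ ⟨j, hj⟩
    have : ⟪w i, w j⟫ = (s i)⁻¹ * ((s j)⁻¹ * (hH.eigenvalues j * ⟪V₀ i, V₀ j⟫)) := by
      rw [hw]
      simp only [real_inner_smul_left, real_inner_smul_right, key]
      ring
    by_cases hij : i = j
    · subst hij
      have hVii : ⟪V₀ i, V₀ i⟫ = 1 := by
        have h1 := V₀.orthonormal.1 i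
        rw [real_inner_self_eq_norm_mul_norm, h1, mul_one]
      have hsi : s i ≠ 0 := hi
      simp only [Set.restrict_apply, Set.restrict, this, hVii, mul_one, ↓reduceIte]
      rw [← hsq i, pow_two]
      field_simp
    · have hVij : ⟪V₀ i, V₀ j⟫ = 0 := by
        have := V₀.orthonormal.2 (show i ≠ j from hij)
        exact this
      simp only [Set.restrict_apply, Set.restrict, this, hVij, mul_zero]
      simp [Subtype.ext_iff, hij]
  obtain ⟨U₀, hU₀⟩ := horm.exists_orthonormalBasis_extension_of_card_eq
    (by simp) 
  have hTV₀ : ∀ j, T (V₀ j) = s j • U₀ j := by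
    intro j
    by_cases hj : s j = 0
    · have hevj : hH.eigenvalues j = 0 := by rw [← hsq j, hj]; ring
      have h0 : ⟪T (V₀ j), T (V₀ j)⟫ = 0 := by rw [key, hevj, zero_mul]
      have : T (V₀ j) = 0 := by rwa [inner_self_eq_zero] at h0
      rw [this, hj, zero_smul]
    · have hmem : j ∈ S := hj
      rw [hU₀ j hmem, hw]
      rw [smul_inv_smul₀ hj]
  refine ⟨U₀.reindex ρ, V₀.reindex ρ, fun j => ?_⟩
  simp only [OrthonormalBasis.reindex_apply]
  rw [hTV₀ (ρ.symm j)]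
  have := hρ (ρ.symm j)
  rw [Equiv.apply_symm_apply] at this
  rw [show s (ρ.symm j) = svals X j from this]

end svd

section ub
variable {n : ℕ}

open RealInnerProductSpace

/-- the index set of the `k` largest positions -/
def Fk (n k : ℕ) : Finset (Fin n) := Finset.univ.filter (fun i : Fin n => (i : ℕ) < k)

lemma comb (σ d : Fin n → ℝ) (hσa : Antitone σ) (hσ0 : ∀ i, 0 ≤ σ i)
    (hd0 : ∀ i, 0 ≤ d i) (hd1 : ∀ i, d i ≤ 1) (k : ℕ)
    (hsum : ∑ i, d i ≤ ((Fk n k).card : ℝ)) :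
    ∑ i, σ i * d i ≤ ∑ i ∈ Fk n k, σ i := by
  classical
  by_cases hk : n ≤ k
  · have hF : Fk n k = Finset.univ := by
      ext i; simp [Fk, lt_of_lt_of_le i.is_lt hk]
    rw [hF]
    exact Finset.sum_le_sum fun i _ => mul_le_of_le_one_right (hσ0 i) (hd1 i)
  · push_neg at hk
    set κ : Fin n := ⟨k, hk⟩ with hκ
    have hsplit : ∑ i, σ i * d i
        = ∑ i ∈ Fk n k, σ i * d i + ∑ i ∈ Finset.univ.filter (fun i : Fin n => ¬ ((i:ℕ) < k)), σ i * d i := by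
      rw [Fk, Finset.sum_filter_add_sum_filter_not]
    have hdsplit : ∑ i, d i
        = ∑ i ∈ Fk n k, d i + ∑ i ∈ Finset.univ.filter (fun i : Fin n => ¬ ((i:ℕ) < k)), d i := by
      rw [Fk, Finset.sum_filter_add_sum_filter_not]
    have htail : ∑ i ∈ Finset.univ.filter (fun i : Fin n => ¬ ((i:ℕ) < k)), σ i * d i
        ≤ σ κ * (((Fk n k).card : ℝ) - ∑ i ∈ Fk n k, d i) := by
      have h1 : ∑ i ∈ Finset.univ.filter (fun i : Fin n => ¬ ((i:ℕ) < k)), σ i * d i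
          ≤ ∑ i ∈ Finset.univ.filter (fun i : Fin n => ¬ ((i:ℕ) < k)), σ κ * d i := by
        refine Finset.sum_le_sum fun i hi => ?_
        have hki : κ ≤ i := by
          have := (Finset.mem_filter.mp hi).2
          push_neg at this
          exact this
        exact mul_le_mul_of_nonneg_right (hσa hki) (hd0 i)
      have h2 : ∑ i ∈ Finset.univ.filter (fun i : Fin n => ¬ ((i:ℕ) < k)), σ κ * d i
          = σ κ * ∑ i ∈ Finset.univ.filter (fun i : Fin n => ¬ ((i:ℕ) < k)), d i := by
        rw [Finset.mul_sum]
      have h3 : ∑ i ∈ Finset.univ.filter (fun i : Fin n => ¬ ((i:ℕ) < k)), d i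
          ≤ ((Fk n k).card : ℝ) - ∑ i ∈ Fk n k, d i := by
        have := hdsplit ▸ hsum
        linarith
      have h4 : 0 ≤ σ κ := hσ0 κ
      calc ∑ i ∈ Finset.univ.filter (fun i : Fin n => ¬ ((i:ℕ) < k)), σ i * d i
          ≤ σ κ * ∑ i ∈ Finset.univ.filter (fun i : Fin n => ¬ ((i:ℕ) < k)), d i := h2 ▸ h1
        _ ≤ σ κ * (((Fk n k).card : ℝ) - ∑ i ∈ Fk n k, d i) :=
            mul_le_mul_of_nonneg_left h3 h4
    have hcard : ((Fk n k).card : ℝ) = ∑ _i ∈ Fk n k, (1 : ℝ) := by simp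
    have hmain : ∑ i ∈ Fk n k, σ i * d i + σ κ * (((Fk n k).card : ℝ) - ∑ i ∈ Fk n k, d i)
        ≤ ∑ i ∈ Fk n k, σ i := by
      have hrw : σ κ * (((Fk n k).card : ℝ) - ∑ i ∈ Fk n k, d i)
          = ∑ i ∈ Fk n k, σ κ * (1 - d i) := by
        rw [hcard, ← Finset.sum_sub_distrib, Finset.mul_sum]
      rw [hrw, ← Finset.sum_add_distrib]
      refine Finset.sum_le_sum fun i hi => ?_
      have hik : i ≤ κ := by
        have := (Finset.mem_filter.mp hi).2
        exact le_of_lt this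
      have hσκ : σ κ ≤ σ i := hσa hik
      have := hd1 i
      have := hd0 i
      nlinarith
    linarith

end ub

section ub2
variable {n : ℕ}

open RealInnerProductSpace

lemma sum_inner_le (X : Matrix (Fin n) (Fin n) ℝ)
    (p q : Fin n → EuclideanSpace ℝ (Fin n))
    (hp : Orthonormal ℝ p) (hq : Orthonormal ℝ q) (k : ℕ) :
    ∑ i ∈ Fk n k, ⟪p i, Matrix.toEuclideanLin X (q i)⟫ ≤ ∑ i ∈ Fk n k, svals X i := by
  classical
  obtain ⟨U, V, hsvd⟩ := exists_svd X
  set T : EuclideanSpace ℝ (Fin n) →ₗ[ℝ] EuclideanSpace ℝ (Fin n) := Matrix.toEuclideanLin X with hT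
  have hexp : ∀ i, ⟪p i, T (q i)⟫ = ∑ j, svals X j * (⟪V j, q i⟫ * ⟪p i, U j⟫) := by
    intro i
    conv_lhs => rw [← V.sum_repr' (q i)]
    rw [map_sum, inner_sum]
    refine Finset.sum_congr rfl fun j _ => ?_
    rw [LinearMap.map_smul, real_inner_smul_right, hsvd j, real_inner_smul_right]
    ring
  set a : Fin n → ℝ := fun j => ∑ i ∈ Fk n k, ⟪p i, U j⟫ ^ 2 with ha
  set b : Fin n → ℝ := fun j => ∑ i ∈ Fk n k, ⟪V j, q i⟫ ^ 2 with hb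
  have hc : ∑ i ∈ Fk n k, ⟪p i, T (q i)⟫
      = ∑ j, svals X j * ∑ i ∈ Fk n k, ⟪V j, q i⟫ * ⟪p i, U j⟫ := by
    simp_rw [hexp]
    rw [Finset.sum_comm]
    refine Finset.sum_congr rfl fun j _ => ?_
    rw [Finset.mul_sum]
  have hd0 : ∀ j, (0:ℝ) ≤ (a j + b j) / 2 := by
    intro j
    have h1 : 0 ≤ a j := Finset.sum_nonneg fun i _ => sq_nonneg _
    have h2 : 0 ≤ b j := Finset.sum_nonneg fun i _ => sq_nonneg _
    linarith
  have ha1 : ∀ j, a j ≤ 1 := by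
    intro j
    have := hp.sum_inner_products_le (U j) (s := Fk n k)
    have hUj : ‖U j‖ = 1 := U.orthonormal.1 j
    rw [hUj] at this
    simpa [Real.norm_eq_abs, sq_abs] using this
  have hb1 : ∀ j, b j ≤ 1 := by
    intro j
    have := hq.sum_inner_products_le (V j) (s := Fk n k)
    have hVj : ‖V j‖ = 1 := V.orthonormal.1 j
    rw [hVj] at this
    have hcomm : ∀ i, ⟪V j, q i⟫ ^ 2 = ‖⟪q i, V j⟫‖ ^ 2 := by
      intro i
      rw [real_inner_comm, Real.norm_eq_abs, sq_abs]
    calc b j = ∑ i ∈ Fk n k, ‖⟪q i, V j⟫‖ ^ 2 := Finset.sum_congr rfl fun i _ => hcomm i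
      _ ≤ 1 := by simpa using this
  have hpar : ∀ x : EuclideanSpace ℝ (Fin n), ‖x‖ = 1 → ∀ (B : OrthonormalBasis (Fin n) ℝ (EuclideanSpace ℝ (Fin n))), ∑ j, ⟪x, B j⟫ ^ 2 = 1 := by
    intro x hx B
    have := B.sum_inner_mul_inner x x
    have hxx : ⟪x, x⟫ = 1 := by rw [real_inner_self_eq_norm_mul_norm, hx, mul_one]
    rw [hxx] at this
    calc ∑ j, ⟪x, B j⟫ ^ 2 = ∑ j, ⟪x, B j⟫ * ⟪B j, x⟫ := by
          refine Finset.sum_congr rfl fun j _ => ?_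
          rw [pow_two, real_inner_comm x (B j)]
      _ = 1 := this
  have hsd : ∑ j, (a j + b j) / 2 ≤ ((Fk n k).card : ℝ) := by
    have hsa : ∑ j, a j = ((Fk n k).card : ℝ) := by
      rw [ha]
      rw [Finset.sum_comm]
      rw [Finset.sum_congr rfl fun i (hi : i ∈ Fk n k) => hpar (p i) (hp.1 i) U]
      simp
    have hsb : ∑ j, b j = ((Fk n k).card : ℝ) := by
      have : ∀ j i, ⟪V j, q i⟫ ^ 2 = ⟪q i, V j⟫ ^ 2 := fun j i => by rw [real_inner_comm]
      rw [hb]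
      simp_rw [this]
      rw [Finset.sum_comm]
      rw [Finset.sum_congr rfl fun i (hi : i ∈ Fk n k) => hpar (q i) (hq.1 i) V]
      simp
    rw [← Finset.sum_div, Finset.sum_add_distrib, hsa, hsb]
    linarith
  have hcd : ∀ j, ∑ i ∈ Fk n k, ⟪V j, q i⟫ * ⟪p i, U j⟫ ≤ (a j + b j) / 2 := by
    intro j
    have : (a j + b j) / 2 = ∑ i ∈ Fk n k, (⟪p i, U j⟫ ^ 2 + ⟪V j, q i⟫ ^ 2) / 2 := by
      rw [ha, hb, ← Finset.sum_add_distrib, Finset.sum_div]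
    rw [this]
    refine Finset.sum_le_sum fun i _ => ?_
    nlinarith [sq_nonneg (⟪V j, q i⟫ - ⟪p i, U j⟫)]
  calc ∑ i ∈ Fk n k, ⟪p i, T (q i)⟫
      = ∑ j, svals X j * ∑ i ∈ Fk n k, ⟪V j, q i⟫ * ⟪p i, U j⟫ := hc
    _ ≤ ∑ j, svals X j * ((a j + b j) / 2) :=
        Finset.sum_le_sum fun j _ => mul_le_mul_of_nonneg_left (hcd j) (svals_nonneg X j)
    _ ≤ ∑ i ∈ Fk n k, svals X i :=
        comb (svals X) (fun j => (a j + b j) / 2) (svals_antitone X) (svals_nonneg X)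
          hd0 (fun j => by have := ha1 j; have := hb1 j; linarith) k hsd

lemma kyfan (X Y : Matrix (Fin n) (Fin n) ℝ) (t u : ℝ) (ht : 0 ≤ t) (hu : 0 ≤ u) (k : ℕ) :
    ∑ i ∈ Fk n k, svals (t • X + u • Y) i
      ≤ t * ∑ i ∈ Fk n k, svals X i + u * ∑ i ∈ Fk n k, svals Y i := by
  classical
  obtain ⟨U, V, hsvd⟩ := exists_svd (t • X + u • Y)
  have hw : ∀ i, svals (t • X + u • Y) i
      = t * ⟪U i, Matrix.toEuclideanLin X (V i)⟫ + u * ⟪U i, Matrix.toEuclideanLin Y (V i)⟫ := by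
    intro i
    have h1 : ⟪U i, Matrix.toEuclideanLin (t • X + u • Y) (V i)⟫ = svals (t • X + u • Y) i := by
      rw [hsvd i, real_inner_smul_right, real_inner_self_eq_norm_mul_norm, U.orthonormal.1 i]
      ring
    rw [← h1, map_add, LinearEquiv.map_smul, LinearEquiv.map_smul]
    simp only [LinearMap.add_apply, LinearMap.smul_apply, inner_add_right, real_inner_smul_right]
  calc ∑ i ∈ Fk n k, svals (t • X + u • Y) i
      = t * ∑ i ∈ Fk n k, ⟪U i, Matrix.toEuclideanLin X (V i)⟫
        + u * ∑ i ∈ Fk n k, ⟪U i, Matrix.toEuclideanLin Y (V i)⟫ := by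
        rw [Finset.mul_sum, Finset.mul_sum, ← Finset.sum_add_distrib]
        exact Finset.sum_congr rfl fun i _ => hw i
    _ ≤ t * ∑ i ∈ Fk n k, svals X i + u * ∑ i ∈ Fk n k, svals Y i := by
        have h1 := sum_inner_le X U V U.orthonormal V.orthonormal k
        have h2 := sum_inner_le Y U V U.orthonormal V.orthonormal k
        have := mul_le_mul_of_nonneg_left h1 ht
        have := mul_le_mul_of_nonneg_left h2 hu
        linarith

end ub2

section hull
variable {n : ℕ}

/-- signed permutations of a vector -/
def signedPerms (w : Fin n → ℝ) : Set (Fin n → ℝ) :=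
  {x | ∃ (e : Equiv.Perm (Fin n)) (ε : Fin n → ℝ),
    (∀ i, ε i = 1 ∨ ε i = -1) ∧ x = fun i => ε i * w (e i)}

lemma signedPerms_finite (w : Fin n → ℝ) : (signedPerms w).Finite := by
  classical
  have hsub : signedPerms w ⊆ Set.range
      (fun p : Equiv.Perm (Fin n) × (Fin n → Bool) =>
        fun i => (if p.2 i then (1:ℝ) else -1) * w (p.1 i)) := by
    rintro x ⟨e, ε, hε, rfl⟩
    refine ⟨(e, fun i => if ε i = 1 then true else false), ?_⟩
    funext i
    rcases hε i with h | h <;> simp [h] <;> intro hcon <;> linarith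
  exact Set.Finite.subset (Set.finite_range _) hsub

lemma sum_Fk_eq (g : Fin n → ℝ) (k : ℕ) :
    ∑ i ∈ Fk n k, g i = ∑ j ∈ Finset.range k, (if h : j < n then g ⟨j, h⟩ else 0) := by
  classical
  rw [← Finset.sum_filter_add_sum_filter_not (Finset.range k) (fun j => j < n)]
  have h2 : ∑ j ∈ (Finset.range k).filter (fun j => ¬ j < n),
      (if h : j < n then g ⟨j, h⟩ else 0) = 0 :=
    Finset.sum_eq_zero fun j hj => dif_neg (Finset.mem_filter.mp hj).2
  rw [h2, add_zero]
  refine Finset.sum_bij' (fun (i : Fin n) _ => (i : ℕ))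
    (fun j hj => (⟨j, (Finset.mem_filter.mp hj).2⟩ : Fin n)) ?_ ?_ ?_ ?_ ?_
  · intro i hi
    simp only [Fk, Finset.mem_filter, Finset.mem_univ, true_and] at hi
    simp [Finset.mem_filter, Finset.mem_range, hi, i.isLt]
  · intro j hj
    simp only [Finset.mem_filter, Finset.mem_range] at hj
    simp [Fk, hj.1]
  · intro i hi; simp
  · intro j hj; simp
  · intro i hi
    simp [i.isLt]

lemma abel_nat (N : ℕ) (D x : ℕ → ℝ) (hDa : ∀ i, i + 1 < N → D (i + 1) ≤ D i)
    (hD0 : ∀ i, 0 ≤ D i) (hx : ∀ k, 0 ≤ ∑ j ∈ Finset.range k, x j) :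
    0 ≤ ∑ i ∈ Finset.range N, D i * x i := by
  have hbp := Finset.sum_range_by_parts D x N
  simp only [smul_eq_mul] at hbp
  rw [hbp]
  have h1 : 0 ≤ D (N - 1) * ∑ i ∈ Finset.range N, x i := mul_nonneg (hD0 _) (hx N)
  have h2 : ∑ i ∈ Finset.range (N - 1), (D (i + 1) - D i) * ∑ j ∈ Finset.range (i + 1), x j ≤ 0 := by
    refine Finset.sum_nonpos fun i hi => ?_
    have hiN : i + 1 < N := by
      have := Finset.mem_range.mp hi
      omega
    exact mul_nonpos_of_nonpos_of_nonneg (by linarith [hDa i hiN]) (hx (i + 1))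
  linarith

lemma mem_hull_of_partial_sums (u w : Fin n → ℝ) (hua : Antitone u) (hu0 : ∀ i, 0 ≤ u i)
    (hwa : Antitone w)
    (hps : ∀ k : ℕ, ∑ i ∈ Fk n k, u i ≤ ∑ i ∈ Fk n k, w i) :
    u ∈ convexHull ℝ (signedPerms w) := by
  classical
  by_contra hmem
  obtain ⟨f, c0, hfy, hfu⟩ := geometric_hahn_banach_closed_point
    (convex_convexHull ℝ _) ((signedPerms_finite w).isClosed_convexHull ℝ) hmem
  set c : Fin n → ℝ := fun i => f (fun j => if i = j then 1 else 0) with hc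
  have hfx : ∀ x : Fin n → ℝ, f x = ∑ i, x i * c i := by
    intro x
    conv_lhs => rw [pi_eq_sum_univ x, map_sum]
    refine Finset.sum_congr rfl fun i _ => ?_
    rw [ContinuousLinearMap.map_smul, smul_eq_mul, hc]
  set d : Fin n → ℝ := fun i => |c i| with hd
  set ρ : Equiv.Perm (Fin n) := Fin.revPerm.trans (Tuple.sort d) with hρ
  have hdρ : Antitone (fun i => d (ρ i)) := by
    intro i j hij
    have hm := Tuple.monotone_sort d
    exact hm (Fin.rev_le_rev.mpr hij)
  have hdρ0 : ∀ i, 0 ≤ d (ρ i) := fun i => abs_nonneg _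
  set ε : Fin n → ℝ := fun i => if c i < 0 then -1 else 1 with hε
  have hεpm : ∀ i, ε i = 1 ∨ ε i = -1 := by
    intro i; by_cases h : c i < 0 <;> simp [hε, h]
  have hεc : ∀ i, ε i * c i = d i := by
    intro i
    by_cases h : c i < 0
    · simp [hε, hd, h, abs_of_neg h]
    · simp [hε, hd, h, abs_of_nonneg (not_lt.mp h)]
  set y : Fin n → ℝ := fun i => ε i * w (ρ.symm i) with hy
  have hymem : y ∈ signedPerms w := ⟨ρ.symm, ε, hεpm, rfl⟩
  have hfyc : f y < c0 := hfy y (subset_convexHull ℝ _ hymem)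
  have e1 : f y = ∑ i, d (ρ i) * w i := by
    rw [hfx]
    calc ∑ i, y i * c i = ∑ i, d i * w (ρ.symm i) := by
          refine Finset.sum_congr rfl fun i _ => ?_
          rw [hy, ← hεc i]; ring
      _ = ∑ i, d (ρ i) * w (ρ.symm (ρ i)) := (Equiv.sum_comp ρ (fun i => d i * w (ρ.symm i))).symm
      _ = ∑ i, d (ρ i) * w i := by simp
  have e3 : f u ≤ ∑ i, u i * d i := by
    rw [hfx]
    exact Finset.sum_le_sum fun i _ =>
      mul_le_mul_of_nonneg_left (le_abs_self (c i)) (hu0 i)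
  have e4 : ∑ i, u i * d i ≤ ∑ i, d (ρ i) * u i := by
    have hmono : Monovary (fun i => d (ρ i)) u := by
      intro i j hij
      have : j ≤ i := by
        by_contra hcon
        push_neg at hcon
        exact absurd (hua hcon.le) (not_le.mpr hij)
      exact hdρ this
    have := hmono.sum_comp_perm_mul_le_sum_mul (σ := ρ.symm)
    calc ∑ i, u i * d i = ∑ i, d (ρ (ρ.symm i)) * u i := by
          refine Finset.sum_congr rfl fun i _ => ?_
          rw [Equiv.apply_symm_apply]; ring
      _ ≤ ∑ i, d (ρ i) * u i := this
  have e5 : ∑ i, d (ρ i) * u i ≤ ∑ i, d (ρ i) * w i := by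
    set D : ℕ → ℝ := fun j => if h : j < n then d (ρ ⟨j, h⟩) else 0 with hD
    set xx : ℕ → ℝ := fun j => if h : j < n then w ⟨j, h⟩ - u ⟨j, h⟩ else 0 with hxx
    have habel : 0 ≤ ∑ i ∈ Finset.range n, D i * xx i := by
      refine abel_nat n D xx ?_ ?_ ?_
      · intro i hi
        have h1 : i < n := by omega
        rw [hD]
        simp only [hi, h1, dif_pos]
        exact hdρ (by simp [Fin.le_def])
      · intro i
        rw [hD]
        by_cases h : i < n
        · simp only [h, dif_pos]; exact hdρ0 _
        · simp [h]
      · intro k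
        have := hps k
        rw [sum_Fk_eq u k, sum_Fk_eq w k] at this
        have hrw : ∑ j ∈ Finset.range k, xx j
            = ∑ j ∈ Finset.range k, (if h : j < n then w ⟨j, h⟩ else 0)
              - ∑ j ∈ Finset.range k, (if h : j < n then u ⟨j, h⟩ else 0) := by
          rw [← Finset.sum_sub_distrib]
          refine Finset.sum_congr rfl fun j _ => ?_
          rw [hxx]
          by_cases h : j < n <;> simp [h]
        rw [hrw]
        linarith
    have hr1 : ∑ i ∈ Finset.range n, D i * xx i
        = ∑ i : Fin n, d (ρ i) * (w i - u i) := by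
      rw [← Fin.sum_univ_eq_sum_range (fun j => D j * xx j) n]
      refine Finset.sum_congr rfl fun i _ => ?_
      rw [hD, hxx]
      simp [i.isLt]
    rw [hr1] at habel
    have : ∑ i : Fin n, d (ρ i) * (w i - u i)
        = ∑ i, d (ρ i) * w i - ∑ i, d (ρ i) * u i := by
      rw [← Finset.sum_sub_distrib]
      exact Finset.sum_congr rfl fun i _ => by ring
    linarith [this ▸ habel]
  linarith [e1 ▸ hfyc, hfu]

end hull

section frob
variable {n : ℕ}
open RealInnerProductSpace

lemma parseval_sq (B : OrthonormalBasis (Fin n) ℝ (EuclideanSpace ℝ (Fin n)))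
    (x : EuclideanSpace ℝ (Fin n)) : ∑ j, ⟪x, B j⟫ ^ 2 = ⟪x, x⟫ := by
  have := B.sum_inner_mul_inner x x
  calc ∑ j, ⟪x, B j⟫ ^ 2 = ∑ j, ⟪x, B j⟫ * ⟪B j, x⟫ := by
        refine Finset.sum_congr rfl fun j _ => ?_
        rw [pow_two, real_inner_comm x (B j)]
    _ = ⟪x, x⟫ := this

lemma inner_euclidean_eq_sum (x y : EuclideanSpace ℝ (Fin n)) :
    ⟪x, y⟫ = ∑ l, x l * y l := by
  simp [PiLp.inner_apply, RCLike.inner_apply, conj_trivial, mul_comm]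

lemma sum_sq_svals (X : Matrix (Fin n) (Fin n) ℝ) :
    ∑ i, svals X i ^ 2 = ∑ i, ∑ j, X i j ^ 2 := by
  classical
  obtain ⟨U, V, hsvd⟩ := exists_svd X
  set T : EuclideanSpace ℝ (Fin n) →ₗ[ℝ] EuclideanSpace ℝ (Fin n) := Matrix.toEuclideanLin X with hT
  set r : Fin n → EuclideanSpace ℝ (Fin n) := fun i => (WithLp.equiv 2 (Fin n → ℝ)).symm (X i) with hr
  have happ : ∀ (v : EuclideanSpace ℝ (Fin n)) (l : Fin n), (T v) l = ⟪r l, v⟫ := by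
    intro v l
    rw [inner_euclidean_eq_sum]
    rfl
  have hTv : ∀ v : EuclideanSpace ℝ (Fin n), ⟪T v, T v⟫ = ∑ l, ⟪r l, v⟫ ^ 2 := by
    intro v
    rw [inner_euclidean_eq_sum]
    refine Finset.sum_congr rfl fun l _ => ?_
    rw [happ v l, pow_two]
  calc ∑ i, svals X i ^ 2 = ∑ j, ⟪T (V j), T (V j)⟫ := by
        refine Finset.sum_congr rfl fun j _ => ?_
        rw [hsvd j, real_inner_smul_right, real_inner_smul_left,
          real_inner_self_eq_norm_mul_norm, U.orthonormal.1 j]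
        ring
    _ = ∑ j, ∑ l, ⟪r l, V j⟫ ^ 2 := Finset.sum_congr rfl fun j _ => hTv (V j)
    _ = ∑ l, ∑ j, ⟪r l, V j⟫ ^ 2 := Finset.sum_comm
    _ = ∑ l, ⟪r l, r l⟫ := Finset.sum_congr rfl fun l _ => parseval_sq V (r l)
    _ = ∑ i, ∑ j, X i j ^ 2 := by
        refine Finset.sum_congr rfl fun l _ => ?_
        rw [inner_euclidean_eq_sum]
        refine Finset.sum_congr rfl fun j _ => ?_
        rw [pow_two]
        rfl

end frob

section geom
variable {n : ℕ}

lemma h_le_on_hull (h : (Fin n → ℝ) → ℝ) (hconv : ConvexOn ℝ Set.univ h)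
    (S : Set (Fin n → ℝ)) (c : ℝ) (hS : ∀ s ∈ S, h s = c)
    (x : Fin n → ℝ) (hx : x ∈ convexHull ℝ S) : h x ≤ c := by
  obtain ⟨y, hyS, hle⟩ := hconv.exists_ge_of_mem_convexHull (Set.subset_univ S) hx
  rw [hS y hyS] at hle
  exact hle

lemma h_lt_on_hull (h : (Fin n → ℝ) → ℝ) (hconv : StrictConvexOn ℝ Set.univ h)
    (S : Set (Fin n → ℝ)) (c : ℝ) (hS : ∀ s ∈ S, h s = c)
    (x : Fin n → ℝ) (hx : x ∈ convexHull ℝ S) (hxS : x ∉ S) : h x < c := by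
  have hnotex : x ∉ (convexHull ℝ S).extremePoints ℝ := fun hex =>
    hxS (extremePoints_convexHull_subset hex)
  rw [mem_extremePoints] at hnotex
  push_neg at hnotex
  obtain ⟨x₁, hx₁, x₂, hx₂, hseg, hne⟩ := hnotex hx
  have hx12 : x₁ ≠ x₂ := by
    rintro rfl
    rw [openSegment_same] at hseg
    exact hne (by simpa using hseg.symm) (by simpa using hseg.symm)
  obtain ⟨a, b, ha, hb, hab, hax⟩ := hseg
  have h1 : h x₁ ≤ c := h_le_on_hull h hconv.convexOn S c hS x₁ hx₁
  have h2 : h x₂ ≤ c := h_le_on_hull h hconv.convexOn S c hS x₂ hx₂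
  have := hconv.2 (Set.mem_univ x₁) (Set.mem_univ x₂) hx12 ha hb hab
  rw [hax] at this
  have hfin : a • h x₁ + b • h x₂ ≤ c := by
    simp only [smul_eq_mul]
    have hc : a * c + b * c = c := by rw [← add_mul, hab, one_mul]
    nlinarith [mul_le_mul_of_nonneg_left h1 ha.le, mul_le_mul_of_nonneg_left h2 hb.le]
  linarith

lemma eq_of_mem_signedPerms (u w : Fin n → ℝ) (hua : Antitone u) (hu0 : ∀ i, 0 ≤ u i)
    (hwa : Antitone w) (hw0 : ∀ i, 0 ≤ w i) (hmem : u ∈ signedPerms w) : u = w := by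
  obtain ⟨e, ε, hε, hu⟩ := hmem
  have h1 : ∀ i, u i = w (e i) := by
    intro i
    rcases hε i with h | h
    · rw [hu]; simp [h]
    · have h2 : u i = - w (e i) := by rw [hu]; simp [h]
      have h3 := hu0 i
      have h4 := hw0 (e i)
      have : w (e i) = 0 := by
        rw [h2] at h3
        linarith
      rw [h2, this]
      ring
  have hue : u = w ∘ e := funext h1
  have hperm : (List.ofFn u).Perm (List.ofFn w) := by
    rw [hue]
    exact e.ofFn_comp_perm w
  have hsu : (List.ofFn u).Pairwise (· ≥ ·) := by
    rw [List.pairwise_ofFn]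
    intro i j hij
    exact hua hij.le
  have hsw : (List.ofFn w).Pairwise (· ≥ ·) := by
    rw [List.pairwise_ofFn]
    intro i j hij
    exact hwa hij.le
  haveI : IsAntisymm ℝ (· ≥ ·) := ⟨fun a b h1 h2 => le_antisymm h2 h1⟩
  exact List.ofFn_injective (List.Perm.eq_of_pairwise' hsu hsw hperm)

end geom

theorem stmt_19 (n : ℕ) (h : (Fin n → ℝ) → ℝ)
    (hconv : StrictConvexOn ℝ Set.univ h)
    (hsym : ∀ (e : Equiv.Perm (Fin n)) (ε : Fin n → ℝ), (∀ i, ε i = 1 ∨ ε i = -1) →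
      ∀ x : Fin n → ℝ, h (fun i => ε i * x (e i)) = h x) :
    StrictConvexOn ℝ Set.univ
      (fun X : Matrix (Fin n) (Fin n) ℝ => h (svals X)) := by
  classical
  refine ⟨convex_univ, ?_⟩
  intro X _ Y _ hXY a b ha hb hab
  set Z : Matrix (Fin n) (Fin n) ℝ := a • X + b • Y with hZ
  set w : Fin n → ℝ := fun i => a * svals X i + b * svals Y i with hwdef
  have hwa : Antitone w := by
    intro i j hij
    have h1 := svals_antitone X hij
    have h2 := svals_antitone Y hij
    have := mul_le_mul_of_nonneg_left h1 ha.le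
    have := mul_le_mul_of_nonneg_left h2 hb.le
    simp only [hwdef]
    linarith
  have hw0 : ∀ i, 0 ≤ w i := fun i =>
    add_nonneg (mul_nonneg ha.le (svals_nonneg X i)) (mul_nonneg hb.le (svals_nonneg Y i))
  have hps : ∀ k : ℕ, ∑ i ∈ Fk n k, svals Z i ≤ ∑ i ∈ Fk n k, w i := by
    intro k
    have hkf := kyfan X Y a b ha.le hb.le k
    have : ∑ i ∈ Fk n k, w i
        = a * ∑ i ∈ Fk n k, svals X i + b * ∑ i ∈ Fk n k, svals Y i := by
      rw [Finset.mul_sum, Finset.mul_sum, ← Finset.sum_add_distrib]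
    rw [this]
    exact hkf
  have hhull : svals Z ∈ convexHull ℝ (signedPerms w) :=
    mem_hull_of_partial_sums (svals Z) w (svals_antitone Z) (svals_nonneg Z) hwa hps
  have hSval : ∀ s_ ∈ signedPerms w, h s_ = h w := by
    rintro s_ ⟨e, ε, hε, rfl⟩
    exact hsym e ε hε w
  simp only [smul_eq_mul]
  by_cases hxy : svals X = svals Y
  · have hwX : w = svals X := by
      funext i
      simp only [hwdef, hxy]
      rw [← add_mul, hab, one_mul]
    by_cases hz : svals Z ∈ signedPerms w
    · exfalso
      have heq : svals Z = w :=
        eq_of_mem_signedPerms (svals Z) w (svals_antitone Z) (svals_nonneg Z) hwa hw0 hz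
      have hfz := sum_sq_svals Z
      have hfx := sum_sq_svals X
      have hfy := sum_sq_svals Y
      have hterm : ∀ i j, Z i j ^ 2
          = a * X i j ^ 2 + b * Y i j ^ 2 - a * b * (X i j - Y i j) ^ 2 := by
        intro i j
        have hZij : Z i j = a * X i j + b * Y i j := by
          simp [hZ, Matrix.add_apply, Matrix.smul_apply, smul_eq_mul]
        have hb' : b = 1 - a := by linarith
        rw [hZij, hb']
        ring
      have hid : ∑ i, ∑ j, Z i j ^ 2
          = a * (∑ i, ∑ j, X i j ^ 2) + b * (∑ i, ∑ j, Y i j ^ 2)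
            - a * b * ∑ i, ∑ j, (X i j - Y i j) ^ 2 := by
        simp_rw [hterm]
        simp only [Finset.sum_sub_distrib, Finset.sum_add_distrib, ← Finset.mul_sum]
      have h1 : ∑ i, svals Z i ^ 2 = ∑ i, svals X i ^ 2 := by rw [heq, hwX]
      have h2 : ∑ i, ∑ j, X i j ^ 2 = ∑ i, ∑ j, Y i j ^ 2 := by
        rw [← hfx, ← hfy, hxy]
      have hne0 : 0 < ∑ i, ∑ j, (X i j - Y i j) ^ 2 := by
        rcases (Finset.sum_nonneg fun i _ =>
          Finset.sum_nonneg fun j _ => sq_nonneg (X i j - Y i j)).eq_or_lt with heq0 | hlt0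
        · exfalso
          apply hXY
          ext i j
          have hrow := (Finset.sum_eq_zero_iff_of_nonneg fun i _ =>
            Finset.sum_nonneg fun j _ => sq_nonneg (X i j - Y i j)).mp heq0.symm i (Finset.mem_univ i)
          have hij := (Finset.sum_eq_zero_iff_of_nonneg fun j _ =>
            sq_nonneg (X i j - Y i j)).mp hrow j (Finset.mem_univ j)
          have := sq_eq_zero_iff.mp hij
          linarith
        · exact hlt0
      have hab0 : 0 < a * b := mul_pos ha hb
      rw [hfz, hfx] at h1
      have hsx : a * (∑ i, ∑ j, X i j ^ 2) + b * (∑ i, ∑ j, X i j ^ 2)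
          = ∑ i, ∑ j, X i j ^ 2 := by rw [← add_mul, hab, one_mul]
      have h2' : b * (∑ i, ∑ j, Y i j ^ 2) = b * (∑ i, ∑ j, X i j ^ 2) := by rw [← h2]
      linarith [h1, hid, h2', hsx, mul_pos hab0 hne0]
    · have hlt : h (svals Z) < h w :=
        h_lt_on_hull h hconv (signedPerms w) (h w) hSval (svals Z) hhull hz
      have he1 : h w = h (svals X) := by rw [hwX]
      have he2 : h (svals Y) = h (svals X) := by rw [hxy]
      rw [he1] at hlt
      rw [he2]
      have : a * h (svals X) + b * h (svals X) = h (svals X) := by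
        rw [← add_mul, hab, one_mul]
      linarith
  · have hle : h (svals Z) ≤ h w :=
      h_le_on_hull h hconv.convexOn (signedPerms w) (h w) hSval (svals Z) hhull
    have hlt : h w < a * h (svals X) + b * h (svals Y) := by
      have hstr := hconv.2 (Set.mem_univ (svals X)) (Set.mem_univ (svals Y)) hxy ha hb hab
      have hw' : w = a • svals X + b • svals Y := by
        funext i
        simp [hwdef, smul_eq_mul]
      rw [hw']
      simpa using hstr
    linarith
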